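/- Assume V is a variety with 0⃗ & 1⃗ whose language contains a constant, together with a binary term ∨ such that ∨^A is a semilattice operation on every A ∈ V, and let u₁,…,u_k be (2+l)-ary terms with V ⊨ x ≈ u₁(x,y,0⃗), V ⊨ u_i(x,y,1⃗) ≈ u_{i+1}(x,y,1⃗) for i odd, V ⊨ u_i(x,y,0⃗) ≈ u_{i+1}(x,y,0⃗) for i even, and V ⊨ u_k(x,y,1⃗) ≈ y. Then the formula Φ(x,y,z⃗) := ∀u ((⋀_{i=1}^{k} u_i(x,y,0⃗) ∨ u = u_i(x,y,z⃗) ∨ u) → x ∨ u = y ∨ u) witnesses Definable Factor Congruences for V: for all A, B ∈ V, a,c ∈ A and b,d ∈ B, A×B ⊨ Φ(⟨a,b⟩,⟨c,d⟩,[0⃗,1⃗]) if and only if a = c. -/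
import Mathlib


open FirstOrder Language

universe u v w

namespace Paper

variable {L : FirstOrder.Language.{v, w}}

/-- The direct product of two `L`-structures, with pointwise operations. -/
instance prodStructure (A : Type*) (B : Type*) [L.Structure A] [L.Structure B] :
    L.Structure (A × B) where
  funMap f x := (Structure.funMap f fun i => (x i).1, Structure.funMap f fun i => (x i).2)
  RelMap r x := Structure.RelMap r (fun i => (x i).1) ∧ Structure.RelMap r fun i => (x i).2

/-- The interpretation of a closed term in an algebra. -/
def interp (A : Type u) [L.Structure A] (t : L.Term Empty) : A := t.realize Empty.elim

/-- A theory is equational when each axiom is a universally quantified equation. -/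
def IsEquational (T : L.Theory) : Prop :=
  ∀ φ ∈ T, ∃ (n : ℕ) (t₁ t₂ : L.Term (Empty ⊕ Fin n)), φ = (t₁.bdEqual t₂).alls

/-- `Mod(T)` is a variety with `0⃗` & `1⃗`. -/
def HasZeroOne (T : L.Theory) {l : ℕ} (z o : Fin l → L.Term Empty) : Prop :=
  ∀ (A : Type u) [L.Structure A], A ⊨ T → Nonempty A →
    (∀ i, interp A (z i) = interp A (o i)) → ∀ x y : A, x = y

/-- The binary operation interpreting a binary term. -/
def binOp (j : L.Term (Fin 2)) {A : Type u} [L.Structure A] (a b : A) : A :=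
  j.realize ![a, b]

/-- The interpretation of a `(2+l)`-ary term `u(x, y, w⃗)` at `x, y` and a tuple `w⃗`. -/
def binParam {l : ℕ} (u : L.Term (Fin 2 ⊕ Fin l)) {A : Type u} [L.Structure A]
    (a b : A) (w : Fin l → A) : A :=
  u.realize (Sum.elim ![a, b] w)

end Paper

section Aux
open Paper
variable {L : FirstOrder.Language.{v, w}} {A B : Type u} [L.Structure A] [L.Structure B]

lemma term_realize_prod {α : Type*} (t : L.Term α) (v : α → A × B) :
    t.realize v = (t.realize (fun a => (v a).1), t.realize (fun a => (v a).2)) := by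
  induction t with
  | var => simp [Term.realize]
  | func f ts ih => simp only [Term.realize, ih]; rfl

lemma binOp_prod (j : L.Term (Fin 2)) (a c : A) (b d : B) :
    Paper.binOp j ((a, b) : A × B) (c, d) = (Paper.binOp j a c, Paper.binOp j b d) := by
  unfold Paper.binOp
  rw [term_realize_prod]
  congr 1 <;> · congr 1; funext x; fin_cases x <;> rfl

lemma binParam_prod {l : ℕ} (t : L.Term (Fin 2 ⊕ Fin l)) (a c : A) (b d : B)
    (w : Fin l → A × B) :
    Paper.binParam t ((a, b) : A × B) (c, d) w
      = (Paper.binParam t a c (fun i => (w i).1), Paper.binParam t b d (fun i => (w i).2)) := by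
  unfold Paper.binParam
  rw [term_realize_prod]
  congr 1
  all_goals
    congr 1
    funext x
    cases x with
    | inl i => fin_cases i <;> rfl
    | inr i => rfl

end Aux

/-- **Proposition 6.2 (Semilattice expansions).** Let `V` be a variety with
`0⃗` & `1⃗` possessing a binary term `∨` which is a semilattice operation on every
member of `V`, and let `u₁, …, u_k` be `(2+l)`-ary terms satisfying the Mal'cev
chain identities for `(x, y) ∈ Cg(0⃗, 1⃗)`.  Then the formula
`Φ(x,y,z⃗) = ∀u ((⋀ᵢ uᵢ(x,y,0⃗) ∨ u = uᵢ(x,y,z⃗) ∨ u) → x ∨ u = y ∨ u)`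
witnesses Definable Factor Congruences for `V`. -/
theorem semilattice_formula_witnesses_DFC {L : FirstOrder.Language.{v, w}}
    (T : L.Theory) (hT : Paper.IsEquational T) {l : ℕ} (z o : Fin l → L.Term Empty)
    (h01 : Paper.HasZeroOne.{u} T z o)
    (j : L.Term (Fin 2))
    (hsemi : ∀ (A : Type u) [L.Structure A], A ⊨ T → Nonempty A →
      (∀ a : A, Paper.binOp j a a = a) ∧
      (∀ a b : A, Paper.binOp j a b = Paper.binOp j b a) ∧
      (∀ a b c : A, Paper.binOp j (Paper.binOp j a b) c
        = Paper.binOp j a (Paper.binOp j b c)))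
    {k : ℕ} (hk : 0 < k) (u : Fin k → L.Term (Fin 2 ⊕ Fin l))
    (hu1 : ∀ (A : Type u) [L.Structure A], A ⊨ T → Nonempty A → ∀ x y : A,
      Paper.binParam (u ⟨0, hk⟩) x y (fun i => Paper.interp A (z i)) = x)
    (huodd : ∀ (A : Type u) [L.Structure A], A ⊨ T → Nonempty A → ∀ x y : A,
      ∀ i : Fin k, ∀ _h : i.1 + 1 < k, Even i.1 →
        Paper.binParam (u i) x y (fun i' => Paper.interp A (o i')) =
        Paper.binParam (u ⟨i.1 + 1, _h⟩) x y (fun i' => Paper.interp A (o i')))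
    (hueven : ∀ (A : Type u) [L.Structure A], A ⊨ T → Nonempty A → ∀ x y : A,
      ∀ i : Fin k, ∀ _h : i.1 + 1 < k, Odd i.1 →
        Paper.binParam (u i) x y (fun i' => Paper.interp A (z i')) =
        Paper.binParam (u ⟨i.1 + 1, _h⟩) x y (fun i' => Paper.interp A (z i')))
    (huk : ∀ (A : Type u) [L.Structure A], A ⊨ T → Nonempty A → ∀ x y : A,
      Paper.binParam (u ⟨k - 1, by omega⟩) x y (fun i => Paper.interp A (o i)) = y) :
    ∀ (A : Type u) (B : Type u) [L.Structure A] [L.Structure B],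
      A ⊨ T → B ⊨ T → Nonempty A → Nonempty B →
        ∀ (a c : A) (b d : B),
          (∀ p : A × B,
            (∀ i : Fin k,
              Paper.binOp j (Paper.binParam (u i) ((a, b) : A × B) ((c, d) : A × B)
                (fun i' => (Paper.interp A (z i'), Paper.interp B (z i')))) p =
              Paper.binOp j (Paper.binParam (u i) ((a, b) : A × B) ((c, d) : A × B)
                (fun i' => (Paper.interp A (z i'), Paper.interp B (o i')))) p) →
            Paper.binOp j ((a, b) : A × B) p = Paper.binOp j ((c, d) : A × B) p) ↔
          a = c := by
  intro A B _ _ hA hB nA nB a c b d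
  obtain ⟨idemA, commA, assocA⟩ := hsemi A hA nA
  obtain ⟨idemB, commB, assocB⟩ := hsemi B hB nB
  letI : Max A := ⟨fun x y => Paper.binOp j x y⟩
  letI : Max B := ⟨fun x y => Paper.binOp j x y⟩
  letI instA : SemilatticeSup A := SemilatticeSup.mk' commA assocA idemA
  letI instB : SemilatticeSup B := SemilatticeSup.mk' commB assocB idemB
  have hsupA : ∀ x y : A, Paper.binOp j x y = x ⊔ y := fun _ _ => rfl
  have hsupB : ∀ x y : B, Paper.binOp j x y = x ⊔ y := fun _ _ => rfl
  set zA : Fin l → A := fun i => Paper.interp A (z i) with hzA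
  set oA : Fin l → A := fun i => Paper.interp A (o i) with hoA
  set zB : Fin l → B := fun i => Paper.interp B (z i) with hzB
  set oB : Fin l → B := fun i => Paper.interp B (o i) with hoB
  constructor
  · -- forward direction
    intro h
    have hne : (Finset.univ : Finset (Fin k)).Nonempty := ⟨⟨0, hk⟩, Finset.mem_univ _⟩
    set p₂ : B := Finset.univ.sup' hne
      (fun i => Paper.binParam (u i) b d zB ⊔ Paper.binParam (u i) b d oB) with hp₂
    have key : ∀ p₁ : A, Paper.binOp j ((a, b) : A × B) (p₁, p₂)
        = Paper.binOp j ((c, d) : A × B) (p₁, p₂) := by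
      intro p₁
      apply h
      intro i
      rw [binParam_prod, binParam_prod, binOp_prod, binOp_prod]
      refine Prod.ext rfl ?_
      show Paper.binParam (u i) b d zB ⊔ p₂ = Paper.binParam (u i) b d oB ⊔ p₂
      have hle := Finset.le_sup'
        (f := fun i => Paper.binParam (u i) b d zB ⊔ Paper.binParam (u i) b d oB)
        (Finset.mem_univ i)
      have h1 : Paper.binParam (u i) b d zB ≤ p₂ := le_trans le_sup_left hle
      have h2 : Paper.binParam (u i) b d oB ≤ p₂ := le_trans le_sup_right hle
      rw [sup_eq_right.2 h1, sup_eq_right.2 h2]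
    have k1 := congrArg Prod.fst (key a)
    have k2 := congrArg Prod.fst (key c)
    rw [binOp_prod, binOp_prod] at k1 k2
    simp only [hsupA] at k1 k2
    rw [sup_idem] at k1
    rw [sup_idem] at k2
    -- k1 : a = c ⊔ a, k2 : a ⊔ c = c
    rw [← k2, sup_comm, ← k1]
  · -- backward direction
    rintro rfl p hp
    obtain ⟨p₁, p₂⟩ := p
    rw [binOp_prod, binOp_prod]
    refine Prod.ext rfl ?_
    show Paper.binOp j b p₂ = Paper.binOp j d p₂
    have hp2 : ∀ i : Fin k,
        Paper.binOp j (Paper.binParam (u i) b d zB) p₂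
          = Paper.binOp j (Paper.binParam (u i) b d oB) p₂ := by
      intro i
      have := hp i
      rw [binParam_prod, binParam_prod, binOp_prod, binOp_prod] at this
      exact congrArg Prod.snd this
    have claim : ∀ n : ℕ, ∀ hn : n < k,
        Paper.binOp j (Paper.binParam (u ⟨n, hn⟩) b d oB) p₂ = Paper.binOp j b p₂ := by
      intro n
      induction n with
      | zero =>
        intro hn
        rw [← hp2 ⟨0, hn⟩]
        have := hu1 B hB nB b d
        rw [← hzB] at this
        rw [show (⟨0, hn⟩ : Fin k) = ⟨0, hk⟩ from rfl, this]
      | succ n ih =>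
        intro hn
        have hn' : n < k := Nat.lt_of_succ_lt hn
        rcases Nat.even_or_odd n with hpar | hpar
        · rw [← huodd B hB nB b d ⟨n, hn'⟩ hn hpar]
          exact ih hn'
        · rw [← hp2 ⟨n + 1, hn⟩, ← hueven B hB nB b d ⟨n, hn'⟩ hn hpar, hp2 ⟨n, hn'⟩]
          exact ih hn'
    have hlast := claim (k - 1) (by omega)
    have hk' := huk B hB nB b d
    rw [← hoB] at hk'
    rw [hk'] at hlast
    exact hlast.symm
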